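/- Let S be a 2×2 unitary matrix with det S = 1, entries s_{ij}, and write r = s₂₁/s₁₁ (assuming s₁₁ ≠ 0). Let ρ₋ = [[D₋, P₋],[P₋*, -D₋]] with D₋ real, D₋² + |P₋|² = 1, and set ρ₊ = S⁻¹ ρ₋ S = [[D₊, P₊],[P₊*, -D₊]]. Then D₊ = ((1 - |r|²) D₋ + 2 Re(r P₋)) / (1 + |r|²). -/

import Mathlib

theorem Dplus_formula (S : Matrix (Fin 2) (Fin 2) ℂ)
    (hdet : S.det = 1) (hunit : S * S.conjTranspose = 1)
    (h11 : S 0 0 ≠ 0)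
    (D : ℝ) (P : ℂ) (hDP : D ^ 2 + ‖P‖ ^ 2 = 1)
    (ρm : Matrix (Fin 2) (Fin 2) ℂ)
    (hρm : ρm = Matrix.of ![![(D : ℂ), P], ![(starRingEnd ℂ) P, -(D : ℂ)]])
    (r : ℂ) (hr : r = S 1 0 / S 0 0) :
    (S⁻¹ * ρm * S) 0 0 =
      (((1 - ‖r‖ ^ 2) * D + 2 * (r * P).re) / (1 + ‖r‖ ^ 2) : ℝ) := by
  have hSinv : S⁻¹ = S.conjTranspose := Matrix.inv_eq_right_inv hunit
  have hcol : S.conjTranspose * S = 1 := mul_eq_one_comm.mp hunit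
  set a := S 0 0 with ha
  set b := S 1 0 with hb
  have hkey : (starRingEnd ℂ) a * a + (starRingEnd ℂ) b * b = 1 := by
    have := congrFun (congrFun hcol 0) 0
    simpa [Matrix.mul_apply, Fin.sum_univ_two, Matrix.conjTranspose_apply, Matrix.one_apply]
      using this
  set A := Complex.normSq a with hA
  set B := Complex.normSq b with hB
  have hAB : A + B = 1 := by
    have h := hkey
    rw [← Complex.normSq_eq_conj_mul_self, ← Complex.normSq_eq_conj_mul_self] at h
    exact_mod_cast h
  have hApos : 0 < A := by
    rw [hA]
    exact Complex.normSq_pos.mpr h11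
  -- Left side
  have hL : (S⁻¹ * ρm * S) 0 0 = (((A - B) * D + 2 * ((starRingEnd ℂ) a * P * b).re : ℝ) : ℂ) := by
    rw [hSinv, hρm]
    simp only [Matrix.mul_apply, Fin.sum_univ_two, Matrix.conjTranspose_apply, Matrix.of_apply,
      Matrix.cons_val', Matrix.cons_val_zero, Matrix.cons_val_one, Matrix.head_cons,
      Matrix.empty_val', Matrix.cons_val_fin_one, Matrix.head_fin_const]
    have h1 : (starRingEnd ℂ) a * a = (A : ℂ) := by
      rw [hA, Complex.normSq_eq_conj_mul_self]
    have h2 : (starRingEnd ℂ) b * b = (B : ℂ) := by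
      rw [hB, Complex.normSq_eq_conj_mul_self]
    have h3 : (starRingEnd ℂ) a * P * b + (starRingEnd ℂ) ((starRingEnd ℂ) a * P * b)
        = 2 * (((starRingEnd ℂ) a * P * b).re : ℂ) := by
      rw [Complex.add_conj]; push_cast; ring
    calc ((starRingEnd ℂ) a * (D : ℂ) + (starRingEnd ℂ) b * (starRingEnd ℂ) P) * a +
        ((starRingEnd ℂ) a * P + (starRingEnd ℂ) b * -(D : ℂ)) * b
        = (starRingEnd ℂ) a * a * (D : ℂ) - (starRingEnd ℂ) b * b * (D : ℂ) +
          ((starRingEnd ℂ) a * P * b + (starRingEnd ℂ) ((starRingEnd ℂ) a * P * b)) := by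
          simp only [map_mul, Complex.conj_conj]
          ring
      _ = ((A : ℂ) - B) * D + 2 * (((starRingEnd ℂ) a * P * b).re : ℂ) := by
          rw [h1, h2, h3]; ring
      _ = (((A - B) * D + 2 * ((starRingEnd ℂ) a * P * b).re : ℝ) : ℂ) := by push_cast; ring
  rw [hL]
  congr 1
  -- Right side: reduce abs and re
  have habs : ‖r‖ ^ 2 = B / A := by
    rw [hr, Complex.sq_norm, Complex.normSq_div, ← hA, ← hB]
  have hre : (r * P).re = ((starRingEnd ℂ) a * P * b).re / A := by
    have : r * P = ((starRingEnd ℂ) a * P * b) / (A : ℂ) := by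
      rw [hr]
      have hAa : (A : ℂ) = a * (starRingEnd ℂ) a := by
        rw [hA, Complex.normSq_eq_conj_mul_self]; ring
      have hca : (starRingEnd ℂ) a ≠ 0 := by
        simpa using h11
      rw [hAa]
      field_simp
    rw [this]
    rw [Complex.div_ofReal_re]
  set C := ((starRingEnd ℂ) a * P * b).re with hC
  rw [habs, hre]
  have hAne : A ≠ 0 := ne_of_gt hApos
  field_simp
  linear_combination ((A - B) * D + 2 * C) * hAB
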